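/- Taking v = u¹ and λ = −ρ¹ in the implicit first-stage weak formulation yields the identity ‖u¹‖²_{L²} + ‖ρ¹‖²_{L²} = (uⁿ, u¹) + (ρⁿ, ρ¹), and hence by Cauchy–Schwarz, ‖u¹‖²_{L²} + ‖ρ¹‖²_{L²} ≤ ‖uⁿ‖²_{L²} + ‖ρⁿ‖²_{L²}. -/

import Mathlib

open MeasureTheory

noncomputable section

abbrev Pt (d : ℕ) := EuclideanSpace ℝ (Fin d)

def Per {d : ℕ} {α : Type*} (f : Pt d → α) : Prop :=
  ∀ (x : Pt d) (i : Fin d), f (x + EuclideanSpace.single i 1) = f x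

def Box (d : ℕ) : Set (Pt d) := {x | ∀ i, x i ∈ Set.Icc (0 : ℝ) 1}

def dvg {d : ℕ} (u : Pt d → Pt d) (x : Pt d) : ℝ :=
  ∑ i, fderiv ℝ u x (EuclideanSpace.single i 1) i

def Smoo {d : ℕ} {F : Type*} [NormedAddCommGroup F] [NormedSpace ℝ F]
    (f : Pt d → F) : Prop := ContDiff ℝ (⊤ : ℕ∞) f

lemma box_compact (d : ℕ) : IsCompact (Box d) := by
  have h : Box d = (EuclideanSpace.equiv (Fin d) ℝ).toHomeomorph ⁻¹'
      (Set.univ.pi fun _ => Set.Icc (0:ℝ) 1) := by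
    ext x; exact ⟨fun h i _ => h i, fun h i => h i trivial⟩
  rw [h, Homeomorph.isCompact_preimage]
  exact isCompact_univ_pi fun _ => isCompact_Icc

theorem implicit_first_stage_identity (d : ℕ)
    (Δt β : ℝ) (hΔt : 0 < Δt) (hβ : 0 < β)
    (ρn ρ1 : Pt d → ℝ) (un u1 : Pt d → Pt d)
    (hρn : Smoo ρn) (hρ1 : Smoo ρ1) (hun : Smoo un) (hu1 : Smoo u1)
    (hpρn : Per ρn) (hpρ1 : Per ρ1) (hpun : Per un) (hpu1 : Per u1)
    (hweak₁ : ∀ v : Pt d → Pt d, Smoo v → Per v →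
      (∫ x in Box d, (inner ℝ (u1 x) (v x) : ℝ)) -
        β * Δt * (∫ x in Box d, ρ1 x * dvg v x) =
      ∫ x in Box d, (inner ℝ (un x) (v x) : ℝ))
    (hweak₂ : ∀ l : Pt d → ℝ, Smoo l → Per l →
      -(β * Δt * (∫ x in Box d, dvg u1 x * l x)) - (∫ x in Box d, ρ1 x * l x) =
      -(∫ x in Box d, ρn x * l x)) :
    ((∫ x in Box d, ‖u1 x‖ ^ 2) + ∫ x in Box d, (ρ1 x) ^ 2 =
      (∫ x in Box d, (inner ℝ (un x) (u1 x) : ℝ)) + ∫ x in Box d, ρn x * ρ1 x) ∧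
    ((∫ x in Box d, ‖u1 x‖ ^ 2) + ∫ x in Box d, (ρ1 x) ^ 2 ≤
      (∫ x in Box d, ‖un x‖ ^ 2) + ∫ x in Box d, (ρn x) ^ 2) := by
  have h1 := hweak₁ u1 hu1 hpu1
  have h2 := hweak₂ ρ1 hρ1 hpρ1
  have e1 : (∫ x in Box d, (inner ℝ (u1 x) (u1 x) : ℝ)) = ∫ x in Box d, ‖u1 x‖ ^ 2 := by
    simp only [real_inner_self_eq_norm_sq]
  have e2 : (∫ x in Box d, ρ1 x * ρ1 x) = ∫ x in Box d, (ρ1 x) ^ 2 := by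
    simp only [← sq]
  have e3 : (∫ x in Box d, ρ1 x * dvg u1 x) = ∫ x in Box d, dvg u1 x * ρ1 x := by
    simp only [mul_comm]
  rw [e1, e3] at h1
  rw [e2] at h2
  have hid : (∫ x in Box d, ‖u1 x‖ ^ 2) + ∫ x in Box d, (ρ1 x) ^ 2 =
      (∫ x in Box d, (inner ℝ (un x) (u1 x) : ℝ)) + ∫ x in Box d, ρn x * ρ1 x := by
    linarith
  refine ⟨hid, ?_⟩
  have hK := box_compact d
  have hM : MeasurableSet (Box d) := hK.measurableSet
  have int_inner : IntegrableOn (fun x => (inner ℝ (un x) (u1 x) : ℝ)) (Box d) :=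
    (hun.continuous.inner hu1.continuous).continuousOn.integrableOn_compact hK
  have int_un : IntegrableOn (fun x => ‖un x‖ ^ 2) (Box d) :=
    (hun.continuous.norm.pow 2).continuousOn.integrableOn_compact hK
  have int_u1 : IntegrableOn (fun x => ‖u1 x‖ ^ 2) (Box d) :=
    (hu1.continuous.norm.pow 2).continuousOn.integrableOn_compact hK
  have int_mul : IntegrableOn (fun x => ρn x * ρ1 x) (Box d) :=
    (hρn.continuous.mul hρ1.continuous).continuousOn.integrableOn_compact hK
  have int_ρn : IntegrableOn (fun x => (ρn x) ^ 2) (Box d) :=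
    (hρn.continuous.pow 2).continuousOn.integrableOn_compact hK
  have int_ρ1 : IntegrableOn (fun x => (ρ1 x) ^ 2) (Box d) :=
    (hρ1.continuous.pow 2).continuousOn.integrableOn_compact hK
  have hle1 : (∫ x in Box d, (inner ℝ (un x) (u1 x) : ℝ)) ≤
      ∫ x in Box d, (‖un x‖ ^ 2 + ‖u1 x‖ ^ 2) / 2 := by
    refine setIntegral_mono_on int_inner ((int_un.add int_u1).div_const 2) hM ?_
    intro x _
    have h := real_inner_le_norm (un x) (u1 x)
    nlinarith [sq_nonneg (‖un x‖ - ‖u1 x‖)]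
  have hle2 : (∫ x in Box d, ρn x * ρ1 x) ≤
      ∫ x in Box d, ((ρn x) ^ 2 + (ρ1 x) ^ 2) / 2 := by
    refine setIntegral_mono_on int_mul ((int_ρn.add int_ρ1).div_const 2) hM ?_
    intro x _
    nlinarith [sq_nonneg (ρn x - ρ1 x)]
  rw [show (fun x => (‖un x‖ ^ 2 + ‖u1 x‖ ^ 2) / 2) = fun x => (‖un x‖ ^ 2 + ‖u1 x‖ ^ 2) / 2 from rfl] at hle1
  have s1 : (∫ x in Box d, (‖un x‖ ^ 2 + ‖u1 x‖ ^ 2) / 2) =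
      ((∫ x in Box d, ‖un x‖ ^ 2) + ∫ x in Box d, ‖u1 x‖ ^ 2) / 2 := by
    rw [integral_div, integral_add int_un int_u1]
  have s2 : (∫ x in Box d, ((ρn x) ^ 2 + (ρ1 x) ^ 2) / 2) =
      ((∫ x in Box d, (ρn x) ^ 2) + ∫ x in Box d, (ρ1 x) ^ 2) / 2 := by
    rw [integral_div, integral_add int_ρn int_ρ1]
  rw [s1] at hle1
  rw [s2] at hle2
  linarith
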